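/- For the set A = {1 + 3j : j ≥ 0}, the number of compositions of n avoiding A is given by the closed formula c_{\bar A}(n) = Σ over the three roots ρ of 1 - x^2 - 2x^3 of ((1+ρ)/(2+6ρ)) · ρ^{-n}. -/

import Mathlib

noncomputable def compCount (A : Set ℕ) (n : ℕ) : ℕ :=
  Nat.card {l : List ℕ // l.sum = n ∧ ∀ x ∈ l, 0 < x ∧ x ∈ A}

def Fs : ℕ → Finset (List ℕ)
  | 0 => {[]}
  | (n+1) =>
    ((Finset.Icc 1 (n+1)).filter fun k => k % 3 ≠ 1).attach.biUnion
      (fun k => (Fs (n+1-k.1)).image (k.1 :: ·))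
decreasing_by
  have h := (Finset.mem_filter.mp k.2).1
  have := (Finset.mem_Icc.mp h).1
  omega

lemma mem_Fs (n : ℕ) (l : List ℕ) :
    l ∈ Fs n ↔ l.sum = n ∧ ∀ x ∈ l, 0 < x ∧ x % 3 ≠ 1 := by
  induction n using Nat.strong_induction_on generalizing l with
  | _ n ih =>
    match n with
    | 0 =>
      simp only [Fs, Finset.mem_singleton]
      constructor
      · rintro rfl; simp
      · rintro ⟨hs, hp⟩
        cases l with
        | nil => rfl
        | cons a t =>
          exfalso
          have := (hp a (by simp)).1
          simp [List.sum_cons] at hs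
          omega
    | (n+1) =>
      rw [Fs]
      simp only [Finset.mem_biUnion, Finset.mem_attach, Finset.mem_image, true_and,
        Subtype.exists, Finset.mem_filter, Finset.mem_Icc]
      constructor
      · rintro ⟨k, ⟨⟨hk1, hk2⟩, hk3⟩, t, ht, rfl⟩
        rw [ih (n+1-k) (by omega)] at ht
        obtain ⟨hts, htp⟩ := ht
        refine ⟨by simp [List.sum_cons, hts]; omega, ?_⟩
        intro x hx
        rcases List.mem_cons.mp hx with rfl | hx
        · exact ⟨by omega, hk3⟩
        · exact htp x hx
      · rintro ⟨hs, hp⟩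
        cases l with
        | nil => simp at hs
        | cons a t =>
          have ha := hp a (by simp)
          simp only [List.sum_cons] at hs
          refine ⟨a, ⟨⟨by omega, by omega⟩, ha.2⟩, t, ?_, rfl⟩
          rw [ih (n+1-a) (by omega)]
          exact ⟨by omega, fun x hx => hp x (List.mem_cons_of_mem a hx)⟩

lemma card_Fs_succ (n : ℕ) :
    (Fs (n+1)).card =
      ∑ k ∈ (Finset.Icc 1 (n+1)).filter (fun k => k % 3 ≠ 1), (Fs (n+1-k)).card := by
  rw [Fs]
  rw [Finset.card_biUnion]
  · rw [← Finset.sum_attach ((Finset.Icc 1 (n+1)).filter fun k => k % 3 ≠ 1)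
      (fun k => (Fs (n+1-k)).card)]
    refine Finset.sum_congr rfl fun k _ => ?_
    exact Finset.card_image_of_injective _ (List.cons_injective)
  · intro x _ y _ hxy
    simp only [Finset.disjoint_left, Finset.mem_image]
    rintro l ⟨t, _, rfl⟩ ⟨s, _, hc⟩
    simp only [List.cons.injEq] at hc
    exact hxy (Subtype.ext hc.1.symm)

lemma Fs_one : Fs 1 = ∅ := by
  ext l
  simp only [mem_Fs, Finset.notMem_empty, iff_false, not_and]
  intro hs hp
  match l with
  | [] => simp at hs
  | a :: t =>
    have ha := hp a (by simp)
    simp only [List.sum_cons] at hs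
    omega

lemma Fs_two : Fs 2 = {[2]} := by
  ext l
  simp only [mem_Fs, Finset.mem_singleton]
  constructor
  · rintro ⟨hs, hp⟩
    match l with
    | [] => simp at hs
    | [a] =>
      have := hp a (by simp)
      simp only [List.sum_cons, List.sum_nil] at hs
      have : a = 2 := by omega
      rw [this]
    | a :: b :: t =>
      have ha := hp a (by simp)
      have hb := hp b (by simp)
      simp only [List.sum_cons] at hs
      omega
  · rintro rfl
    exact ⟨rfl, by norm_num⟩

lemma Fs_three : Fs 3 = {[3]} := by
  ext l
  simp only [mem_Fs, Finset.mem_singleton]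
  constructor
  · rintro ⟨hs, hp⟩
    match l with
    | [] => simp at hs
    | [a] =>
      have := hp a (by simp)
      simp only [List.sum_cons, List.sum_nil] at hs
      have : a = 3 := by omega
      rw [this]
    | a :: b :: t =>
      have ha := hp a (by simp)
      have hb := hp b (by simp)
      simp only [List.sum_cons] at hs
      omega
  · rintro rfl
    exact ⟨rfl, by norm_num⟩

lemma card_rec (m : ℕ) :
    (Fs (m+4)).card = (Fs (m+2)).card + 2 * (Fs (m+1)).card := by
  have hset : (Finset.Icc 1 (m+4)).filter (fun k => k % 3 ≠ 1) =
      insert 2 (insert 3 ((Finset.Icc 4 (m+4)).filter (fun k => k % 3 ≠ 1))) := by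
    ext k
    simp only [Finset.mem_filter, Finset.mem_Icc, Finset.mem_insert]
    omega
  have h1 : (Fs (m+4)).card =
      ∑ k ∈ (Finset.Icc 1 (m+4)).filter (fun k => k % 3 ≠ 1), (Fs (m+4-k)).card :=
    card_Fs_succ (m+3)
  have hn2 : (2:ℕ) ∉ insert 3 ((Finset.Icc 4 (m+4)).filter (fun k => k % 3 ≠ 1)) := by
    simp only [Finset.mem_insert, Finset.mem_filter, Finset.mem_Icc]
    omega
  have hn3 : (3:ℕ) ∉ (Finset.Icc 4 (m+4)).filter (fun k => k % 3 ≠ 1) := by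
    simp only [Finset.mem_filter, Finset.mem_Icc]
    omega
  rw [hset, Finset.sum_insert hn2, Finset.sum_insert hn3] at h1
  have hre : ∑ k ∈ (Finset.Icc 4 (m+4)).filter (fun k => k % 3 ≠ 1), (Fs (m+4-k)).card
      = ∑ j ∈ (Finset.Icc 1 (m+1)).filter (fun k => k % 3 ≠ 1), (Fs (m+1-j)).card := by
    refine Finset.sum_nbij' (fun k => k - 3) (fun j => j + 3) ?_ ?_ ?_ ?_ ?_
    · intro a ha
      simp only [Finset.mem_filter, Finset.mem_Icc] at *
      omega
    · intro a ha
      simp only [Finset.mem_filter, Finset.mem_Icc] at *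
      omega
    · intro a ha
      simp only [Finset.mem_filter, Finset.mem_Icc] at ha
      omega
    · intro a ha
      omega
    · intro a ha
      simp only [Finset.mem_filter, Finset.mem_Icc] at ha
      congr 2
      omega
  rw [hre, ← card_Fs_succ m] at h1
  have e2 : m + 4 - 2 = m + 2 := by omega
  have e3 : m + 4 - 3 = m + 1 := by omega
  rw [e2, e3] at h1
  omega

lemma compCount_eq (n : ℕ) :
    compCount {x | 0 < x ∧ x % 3 ≠ 1} n = (Fs n).card := by
  rw [compCount]
  have e : {l : List ℕ // l.sum = n ∧ ∀ x ∈ l, 0 < x ∧ x ∈ {x | 0 < x ∧ x % 3 ≠ 1}}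
      ≃ {l // l ∈ Fs n} := by
    refine Equiv.subtypeEquivRight fun l => ?_
    rw [mem_Fs]
    simp only [Set.mem_setOf_eq]
    constructor
    · rintro ⟨hs, hp⟩; exact ⟨hs, fun x hx => ⟨(hp x hx).1, (hp x hx).2.2⟩⟩
    · rintro ⟨hs, hp⟩; exact ⟨hs, fun x hx => ⟨(hp x hx).1, hp x hx⟩⟩
  rw [Nat.card_congr e]
  exact Nat.card_eq_finsetCard (Fs n)


lemma rt_ne_zero (ρ : ℂ) (h : 1 - ρ^2 - 2*ρ^3 = 0) : ρ ≠ 0 := by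
  rintro rfl
  norm_num at h

lemma rt_denom (ρ : ℂ) (h : 1 - ρ^2 - 2*ρ^3 = 0) : 2 + 6*ρ ≠ 0 := by
  intro hd
  have hρ : ρ = -1/3 := by linear_combination hd/6
  rw [hρ] at h
  norm_num at h

lemma pow_rec (ρ : ℂ) (h : 1 - ρ^2 - 2*ρ^3 = 0) (m : ℕ) :
    (1/ρ)^(m+3) = (1/ρ)^(m+1) + 2*(1/ρ)^m := by
  have h0 := rt_ne_zero ρ h
  have key : ρ^2 + 2*ρ^3 = 1 := by linear_combination -h
  have hu : ρ * (1/ρ) = 1 := mul_one_div_cancel h0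
  linear_combination (1/ρ)^(m+3)*h + ((1/ρ)^(m+1)*(ρ*(1/ρ)+1) + 2*(1/ρ)^m*((ρ*(1/ρ))^2+ρ*(1/ρ)+1))*hu

lemma base1 (α β γ : ℂ) (ha : α ≠ 0) (hb : β ≠ 0) (hc : γ ≠ 0)
    (da : 2+6*α ≠ 0) (db : 2+6*β ≠ 0) (dc : 2+6*γ ≠ 0)
    (he1 : α + β + γ = -1/2) (he2 : α*β + α*γ + β*γ = 0) (he3 : α*β*γ = 1/2) :
    (1 + α) / (2 + 6 * α) * (1 / α) ^ 1 +
      (1 + β) / (2 + 6 * β) * (1 / β) ^ 1 +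
      (1 + γ) / (2 + 6 * γ) * (1 / γ) ^ 1 = 0 := by
  have da' : 2 + α*6 ≠ 0 := by rwa [mul_comm]
  field_simp
  linear_combination ((36:ℂ)*α*β^2*γ + (36:ℂ)*α*β^2 + (36:ℂ)*α*β*γ^2 + (24:ℂ)*α*β*γ + (12:ℂ)*α*β + (36:ℂ)*α*γ^2 + (12:ℂ)*α*γ + (36:ℂ)*β^2*γ^2 + (36:ℂ)*β^2*γ + (36:ℂ)*β*γ^2 + (12:ℂ)*β*γ) * he1 + ((-36:ℂ)*β^2*γ + (-36:ℂ)*β^2 + (-36:ℂ)*β*γ^2 + (-54:ℂ)*β*γ + (-18:ℂ)*β + (-36:ℂ)*γ^2 + (-18:ℂ)*γ + (-2:ℂ)) * he2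

lemma base2 (α β γ : ℂ) (ha : α ≠ 0) (hb : β ≠ 0) (hc : γ ≠ 0)
    (da : 2+6*α ≠ 0) (db : 2+6*β ≠ 0) (dc : 2+6*γ ≠ 0)
    (he1 : α + β + γ = -1/2) (he2 : α*β + α*γ + β*γ = 0) (he3 : α*β*γ = 1/2) :
    (1 + α) / (2 + 6 * α) * (1 / α) ^ 2 +
      (1 + β) / (2 + 6 * β) * (1 / β) ^ 2 +
      (1 + γ) / (2 + 6 * γ) * (1 / γ) ^ 2 = 1 := by
  have hden : (2 + 6 * α) * α ^ 2 * ((2 + 6 * β) * β ^ 2) * ((2 + 6 * γ) * γ ^ 2) ≠ 0 :=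
    mul_ne_zero (mul_ne_zero (mul_ne_zero da (pow_ne_zero _ ha))
      (mul_ne_zero db (pow_ne_zero _ hb))) (mul_ne_zero dc (pow_ne_zero _ hc))
  have da' : 2 + α*6 ≠ 0 := by rwa [mul_comm]
  field_simp
  linear_combination ((-216:ℂ)*α^2*β^3*γ^3 + (-72:ℂ)*α^2*β^3*γ^2 + (36:ℂ)*α^2*β^3*γ + (36:ℂ)*α^2*β^3 + (-72:ℂ)*α^2*β^2*γ^3 + (-24:ℂ)*α^2*β^2*γ^2 + (12:ℂ)*α^2*β^2*γ + (12:ℂ)*α^2*β^2 + (36:ℂ)*α^2*β*γ^3 + (12:ℂ)*α^2*β*γ^2 + (36:ℂ)*α^2*γ^3 + (12:ℂ)*α^2*γ^2 + (216:ℂ)*α*β^4*γ^3 + (72:ℂ)*α*β^4*γ^2 + (-36:ℂ)*α*β^4*γ + (-36:ℂ)*α*β^4 + (216:ℂ)*α*β^3*γ^4 + (180:ℂ)*α*β^3*γ^3 + (-54:ℂ)*α*β^3*γ + (-18:ℂ)*α*β^3 + (72:ℂ)*α*β^2*γ^4 + (-20:ℂ)*α*β^2*γ^2 + (-14:ℂ)*α*β^2*γ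 + (-2:ℂ)*α*β^2 + (-36:ℂ)*α*β*γ^4 + (-54:ℂ)*α*β*γ^3 + (-14:ℂ)*α*β*γ^2 + (-36:ℂ)*α*γ^4 + (-18:ℂ)*α*γ^3 + (-2:ℂ)*α*γ^2 + (216:ℂ)*β^4*γ^4 + (72:ℂ)*β^4*γ^3 + (-36:ℂ)*β^4*γ^2 + (-36:ℂ)*β^4*γ + (216:ℂ)*β^3*γ^5 + (180:ℂ)*β^3*γ^4 + (-54:ℂ)*β^3*γ^2 + (-18:ℂ)*β^3*γ + (-216:ℂ)*β^2*γ^6 + (-108:ℂ)*β^2*γ^5 + (-36:ℂ)*β^2*γ^4 + (58:ℂ)*β^2*γ^3 + (16:ℂ)*β^2*γ^2 + (-2:ℂ)*β^2*γ + (-36:ℂ)*β*γ^4 + (-18:ℂ)*β*γ^3 + (-2:ℂ)*β*γ^2 + (-108:ℂ)*γ^5 + (-54:ℂ)*γ^4 + (2:ℂ)*γ^2) * he1 + ((-216:ℂ)*β^4*γ^3 + (-72:ℂ)*β^4*γ^2 + (36:ℂ)*β^4*γ + (36:ℂ)*β^4 + (-432:ℂ)*β^3*γ^4 + (-360:ℂ)*β^3*γ^3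 + (108:ℂ)*β^3*γ + (36:ℂ)*β^3 + (-180:ℂ)*β^2*γ^4 + (-54:ℂ)*β^2*γ^3 + (32:ℂ)*β^2*γ^2 + (41:ℂ)*β^2*γ + (11:ℂ)*β^2 + (216:ℂ)*β*γ^6 + (216:ℂ)*β*γ^5 + (90:ℂ)*β*γ^4 + (-4:ℂ)*β*γ^3 + (-15:ℂ)*β*γ^2 + β + (144:ℂ)*γ^4 + (90:ℂ)*γ^3 + (11:ℂ)*γ^2 + (-1:ℂ)*γ) * he2 + ((-216:ℂ)*γ^6 + (-216:ℂ)*γ^5 + (-54:ℂ)*γ^4 + (4:ℂ)*γ^3 + (2:ℂ)*γ^2) * he3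

lemma base3 (α β γ : ℂ) (ha : α ≠ 0) (hb : β ≠ 0) (hc : γ ≠ 0)
    (da : 2+6*α ≠ 0) (db : 2+6*β ≠ 0) (dc : 2+6*γ ≠ 0)
    (he1 : α + β + γ = -1/2) (he2 : α*β + α*γ + β*γ = 0) (he3 : α*β*γ = 1/2) :
    (1 + α) / (2 + 6 * α) * (1 / α) ^ 3 +
      (1 + β) / (2 + 6 * β) * (1 / β) ^ 3 +
      (1 + γ) / (2 + 6 * γ) * (1 / γ) ^ 3 = 1 := by
  have hden : (2 + 6 * α) * α ^ 3 * ((2 + 6 * β) * β ^ 3) * ((2 + 6 * γ) * γ ^ 3) ≠ 0 :=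
    mul_ne_zero (mul_ne_zero (mul_ne_zero da (pow_ne_zero _ ha))
      (mul_ne_zero db (pow_ne_zero _ hb))) (mul_ne_zero dc (pow_ne_zero _ hc))
  have da' : 2 + α*6 ≠ 0 := by rwa [mul_comm]
  field_simp
  linear_combination ((-216:ℂ)*α^3*β^4*γ^4 + (-72:ℂ)*α^3*β^4*γ^3 + (36:ℂ)*α^3*β^4*γ + (36:ℂ)*α^3*β^4 + (-72:ℂ)*α^3*β^3*γ^4 + (-24:ℂ)*α^3*β^3*γ^3 + (12:ℂ)*α^3*β^3*γ + (12:ℂ)*α^3*β^3 + (36:ℂ)*α^3*β*γ^4 + (12:ℂ)*α^3*β*γ^3 + (36:ℂ)*α^3*γ^4 + (12:ℂ)*α^3*γ^3 + (216:ℂ)*α^2*β^5*γ^4 + (72:ℂ)*α^2*β^5*γ^3 + (-36:ℂ)*α^2*β^5*γ + (-36:ℂ)*α^2*β^5 + (216:ℂ)*α^2*β^4*γ^5 + (180:ℂ)*α^2*β^4*γ^4 + (36:ℂ)*α^2*β^4*γ^3 + (-36:ℂ)*α^2*β^4*γ^2 + (-54:ℂ)*α^2*β^4*γ + (-18:ℂ)*α^2*β^4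 + (72:ℂ)*α^2*β^3*γ^5 + (36:ℂ)*α^2*β^3*γ^4 + (4:ℂ)*α^2*β^3*γ^3 + (-12:ℂ)*α^2*β^3*γ^2 + (-14:ℂ)*α^2*β^3*γ + (-2:ℂ)*α^2*β^3 + (-36:ℂ)*α^2*β^2*γ^4 + (-12:ℂ)*α^2*β^2*γ^3 + (-36:ℂ)*α^2*β*γ^5 + (-54:ℂ)*α^2*β*γ^4 + (-14:ℂ)*α^2*β*γ^3 + (-36:ℂ)*α^2*γ^5 + (-18:ℂ)*α^2*γ^4 + (-2:ℂ)*α^2*γ^3 + (-216:ℂ)*α*β^6*γ^4 + (-72:ℂ)*α*β^6*γ^3 + (36:ℂ)*α*β^6*γ + (36:ℂ)*α*β^6 + (-432:ℂ)*α*β^5*γ^5 + (-360:ℂ)*α*β^5*γ^4 + (-72:ℂ)*α*β^5*γ^3 + (72:ℂ)*α*β^5*γ^2 + (108:ℂ)*α*β^5*γ + (36:ℂ)*α*β^5 + (-216:ℂ)*α*β^4*γ^6 + (-360:ℂ)*α*β^4*γ^5 + (-162:ℂ)*α*β^4*γ^4 + (14:ℂ)*α*β^4*γ^3 + (84:ℂ)*α*β^4*γ^2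 + (59:ℂ)*α*β^4*γ + (11:ℂ)*α*β^4 + (-72:ℂ)*α*β^3*γ^6 + (-72:ℂ)*α*β^3*γ^5 + (14:ℂ)*α*β^3*γ^4 + (22:ℂ)*α*β^3*γ^3 + (20:ℂ)*α*β^3*γ^2 + (9:ℂ)*α*β^3*γ + α*β^3 + (72:ℂ)*α*β^2*γ^5 + (84:ℂ)*α*β^2*γ^4 + (20:ℂ)*α*β^2*γ^3 + (36:ℂ)*α*β*γ^6 + (108:ℂ)*α*β*γ^5 + (59:ℂ)*α*β*γ^4 + (9:ℂ)*α*β*γ^3 + (36:ℂ)*α*γ^6 + (36:ℂ)*α*γ^5 + (11:ℂ)*α*γ^4 + α*γ^3 + (-216:ℂ)*β^6*γ^5 + (-72:ℂ)*β^6*γ^4 + (36:ℂ)*β^6*γ^2 + (36:ℂ)*β^6*γ + (-432:ℂ)*β^5*γ^6 + (-360:ℂ)*β^5*γ^5 + (-72:ℂ)*β^5*γ^4 + (72:ℂ)*β^5*γ^3 + (108:ℂ)*β^5*γ^2 + (36:ℂ)*β^5*γ + (-180:ℂ)*β^4*γ^6 + (-126:ℂ)*β^4*γ^5 + (-22:ℂ)*β^4*γ^4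 + (30:ℂ)*β^4*γ^3 + (41:ℂ)*β^4*γ^2 + (11:ℂ)*β^4*γ + (216:ℂ)*β^3*γ^8 + (216:ℂ)*β^3*γ^7 + (54:ℂ)*β^3*γ^6 + (-40:ℂ)*β^3*γ^5 + (-26:ℂ)*β^3*γ^4 + (-13:ℂ)*β^3*γ^3 + β^3*γ + (-216:ℂ)*β^2*γ^9 + (-216:ℂ)*β^2*γ^8 + (-54:ℂ)*β^2*γ^7 + (148:ℂ)*β^2*γ^6 + (164:ℂ)*β^2*γ^5 + (41:ℂ)*β^2*γ^4 + (-2:ℂ)*β^2*γ^3 + (-1:ℂ)*β^2*γ^2 + (36:ℂ)*β*γ^6 + (36:ℂ)*β*γ^5 + (11:ℂ)*β*γ^4 + β*γ^3 + (-108:ℂ)*γ^8 + (-108:ℂ)*γ^7 + (-27:ℂ)*γ^6 + (2:ℂ)*γ^5 + γ^4) * he1 + ((216:ℂ)*β^6*γ^4 + (72:ℂ)*β^6*γ^3 + (-36:ℂ)*β^6*γ + (-36:ℂ)*β^6 + (648:ℂ)*β^5*γ^5 + (540:ℂ)*β^5*γ^4 + (108:ℂ)*β^5*γ^3 + (-108:ℂ)*β^5*γ^2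 + (-162:ℂ)*β^5*γ + (-54:ℂ)*β^5 + (432:ℂ)*β^4*γ^6 + (756:ℂ)*β^4*γ^5 + (378:ℂ)*β^4*γ^4 + (-14:ℂ)*β^4*γ^3 + (-174:ℂ)*β^4*γ^2 + (-131:ℂ)*β^4*γ + (-29:ℂ)*β^4 + (-216:ℂ)*β^3*γ^7 + (-36:ℂ)*β^3*γ^6 + (162:ℂ)*β^3*γ^5 + (125:ℂ)*β^3*γ^4 + (43:ℂ)*β^3*γ^3 + (-31:ℂ)*β^3*γ^2 + (-63/2:ℂ)*β^3*γ + (-13/2:ℂ)*β^3 + (-108:ℂ)*β^2*γ^7 + (-108:ℂ)*β^2*γ^6 + (-135:ℂ)*β^2*γ^5 + (-118:ℂ)*β^2*γ^4 + (-3:ℂ)*β^2*γ^3 + (25/2:ℂ)*β^2*γ^2 + (-1/2:ℂ)*β^2 + (216:ℂ)*β*γ^9 + (324:ℂ)*β*γ^8 + (162:ℂ)*β*γ^7 + (-121:ℂ)*β*γ^6 + (-274:ℂ)*β*γ^5 + (-159:ℂ)*β*γ^4 + (-59/2:ℂ)*β*γ^3 + β*γ^2 + (1/2:ℂ)*β*γ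 + (108:ℂ)*γ^7 + (72:ℂ)*γ^6 + (-27:ℂ)*γ^5 + (-31:ℂ)*γ^4 + (-15/2:ℂ)*γ^3 + (-1/2:ℂ)*γ^2) * he2 + ((-216:ℂ)*γ^9 + (-324:ℂ)*γ^8 + (-162:ℂ)*γ^7 + (-23:ℂ)*γ^6 + (4:ℂ)*γ^5 + γ^4) * he3


theorem closed_formula_avoiding_one_mod_three (α β γ : ℂ)
    (hαβ : α ≠ β) (hαγ : α ≠ γ) (hβγ : β ≠ γ)
    (hα : 1 - α ^ 2 - 2 * α ^ 3 = 0)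
    (hβ : 1 - β ^ 2 - 2 * β ^ 3 = 0)
    (hγ : 1 - γ ^ 2 - 2 * γ ^ 3 = 0)
    (n : ℕ) (hn : 1 ≤ n) :
    (compCount {x | 0 < x ∧ x % 3 ≠ 1} n : ℂ) =
      (1 + α) / (2 + 6 * α) * (1 / α) ^ n +
      (1 + β) / (2 + 6 * β) * (1 / β) ^ n +
      (1 + γ) / (2 + 6 * γ) * (1 / γ) ^ n := by
  have ha : α ≠ 0 := rt_ne_zero α hα
  have hb : β ≠ 0 := rt_ne_zero β hβ
  have hc : γ ≠ 0 := rt_ne_zero γ hγ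
  have da : 2 + 6*α ≠ 0 := rt_denom α hα
  have db : 2 + 6*β ≠ 0 := rt_denom β hβ
  have dc : 2 + 6*γ ≠ 0 := rt_denom γ hγ
  -- Vieta
  have p1 : 2*(α^2 + α*β + β^2) + (α + β) = 0 := by
    have key : (α - β) * (2*(α^2 + α*β + β^2) + (α + β)) = 0 := by
      linear_combination hβ - hα
    exact (mul_eq_zero.mp key).resolve_left (sub_ne_zero.mpr hαβ)
  have p2 : 2*(α^2 + α*γ + γ^2) + (α + γ) = 0 := by
    have key : (α - γ) * (2*(α^2 + α*γ + γ^2) + (α + γ)) = 0 := by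
      linear_combination hγ - hα
    exact (mul_eq_zero.mp key).resolve_left (sub_ne_zero.mpr hαγ)
  have he1 : α + β + γ = -1/2 := by
    have key : (β - γ) * (2*(α + β + γ) + 1) = 0 := by
      linear_combination p1 - p2
    have h2 := (mul_eq_zero.mp key).resolve_left (sub_ne_zero.mpr hβγ)
    linear_combination h2/2
  have hab : α*β = γ^2 + γ/2 := by
    linear_combination (-(1/2:ℂ))*p1 + (α + β - γ)*he1
  have he2 : α*β + α*γ + β*γ = 0 := by
    linear_combination hab + γ*he1
  have he3 : α*β*γ = 1/2 := by
    linear_combination γ*hab - (1/2:ℂ)*hγ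
  -- base values of the count
  have c1 : compCount {x | 0 < x ∧ x % 3 ≠ 1} 1 = 0 := by
    rw [compCount_eq, Fs_one, Finset.card_empty]
  have c2 : compCount {x | 0 < x ∧ x % 3 ≠ 1} 2 = 1 := by
    rw [compCount_eq, Fs_two, Finset.card_singleton]
  have c3 : compCount {x | 0 < x ∧ x % 3 ≠ 1} 3 = 1 := by
    rw [compCount_eq, Fs_three, Finset.card_singleton]
  induction n using Nat.strong_induction_on with
  | _ n ih =>
    rcases Nat.lt_or_ge n 4 with h4 | h4
    · interval_cases n
      · rw [c1]; push_cast
        exact (base1 α β γ ha hb hc da db dc he1 he2 he3).symm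
      · rw [c2]; push_cast
        exact (base2 α β γ ha hb hc da db dc he1 he2 he3).symm
      · rw [c3]; push_cast
        exact (base3 α β γ ha hb hc da db dc he1 he2 he3).symm
    · obtain ⟨m, rfl⟩ : ∃ m, n = m + 4 := ⟨n - 4, by omega⟩
      have hcrec : compCount {x | 0 < x ∧ x % 3 ≠ 1} (m+4) =
          compCount {x | 0 < x ∧ x % 3 ≠ 1} (m+2) +
            2 * compCount {x | 0 < x ∧ x % 3 ≠ 1} (m+1) := by
        rw [compCount_eq, compCount_eq, compCount_eq]
        exact card_rec m
      have ih2 := ih (m+2) (by omega) (by omega)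
      have ih1 := ih (m+1) (by omega) (by omega)
      rw [hcrec]
      push_cast
      rw [ih2, ih1]
      have ra := pow_rec α hα (m+1)
      have rb := pow_rec β hβ (m+1)
      have rc := pow_rec γ hγ (m+1)
      rw [show m + 4 = m + 1 + 3 from rfl, ra, rb, rc]
      ring
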